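/- Let A, B, C be three affinely independent points in the Euclidean plane. If the distance sum function V is constant on the convex hull of {A, B, C} (i.e. V(P) = V(Q) for all P, Q in the triangle), then the triangle is equilateral: dist A B = dist B C = dist C A. -/

import Mathlib

noncomputable section

/-- The point `(x, y)` of the Euclidean plane `ℝ²`. -/
def pt (x y : ℝ) : EuclideanSpace ℝ (Fin 2) :=
  (WithLp.equiv 2 (Fin 2 → ℝ)).symm ![x, y]

/-- The line through `X` and `Y`, i.e. the affine span of `{X, Y}`, as a set. -/
def lineThrough (X Y : EuclideanSpace ℝ (Fin 2)) : Set (EuclideanSpace ℝ (Fin 2)) :=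
  (affineSpan ℝ {X, Y} : AffineSubspace ℝ (EuclideanSpace ℝ (Fin 2)))

/-- The distance sum function of the triangle `ABC`:
`V(P) = dist(P, line BC) + dist(P, line CA) + dist(P, line AB)`. -/
def vSum (A B C P : EuclideanSpace ℝ (Fin 2)) : ℝ :=
  Metric.infDist P (lineThrough B C) + Metric.infDist P (lineThrough C A) +
    Metric.infDist P (lineThrough A B)

/-- The squared-distance sum function of the triangle `ABC`:
`W(P) = dist(P, line BC)² + dist(P, line CA)² + dist(P, line AB)²`. -/
def wSum (A B C P : EuclideanSpace ℝ (Fin 2)) : ℝ :=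
  Metric.infDist P (lineThrough B C) ^ 2 + Metric.infDist P (lineThrough C A) ^ 2 +
    Metric.infDist P (lineThrough A B) ^ 2

open Metric

lemma infDist_line_sq (X Y P : EuclideanSpace ℝ (Fin 2)) (hXY : X ≠ Y) :
    Metric.infDist P (lineThrough X Y) ^ 2 * ‖Y - X‖ ^ 2 =
      ‖P - X‖ ^ 2 * ‖Y - X‖ ^ 2 - (inner ℝ (P - X) (Y - X) : ℝ) ^ 2 := by
  set u : EuclideanSpace ℝ (Fin 2) := P - X with hu
  set v : EuclideanSpace ℝ (Fin 2) := Y - X with hv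
  have hv0 : v ≠ 0 := sub_ne_zero.2 (Ne.symm hXY)
  have hvnorm : (0:ℝ) < ‖v‖ ^ 2 := pow_pos (norm_pos_iff.2 hv0) 2
  set t : ℝ := (inner ℝ u v : ℝ) / ‖v‖ ^ 2 with ht
  set F : EuclideanSpace ℝ (Fin 2) := t • (Y -ᵥ X) +ᵥ X with hF
  have hFv : F = t • v + X := by simp [hF, hv]
  have hFmem : F ∈ lineThrough X Y := smul_vsub_vadd_mem_affineSpan_pair t X Y
  have key : ∀ s : ℝ, ‖u - s • v‖ ^ 2 = ‖u‖ ^ 2 - 2 * s * (inner ℝ u v : ℝ) + s ^ 2 * ‖v‖ ^ 2 := by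
    intro s
    rw [norm_sub_sq_real, norm_smul, real_inner_smul_right]
    simp [mul_pow]
    ring
  have h1 : dist P F = ‖u - t • v‖ := by
    rw [dist_eq_norm, hFv]
    congr 1
    rw [hu]; abel
  have hdist : Metric.infDist P (lineThrough X Y) = dist P F := by
    refine le_antisymm (Metric.infDist_le_dist_of_mem hFmem) ?_
    by_contra hlt
    push_neg at hlt
    rw [Metric.infDist_lt_iff ⟨F, hFmem⟩] at hlt
    obtain ⟨Q, hQ, hQlt⟩ := hlt
    refine absurd hQlt (not_lt.2 ?_)
    have hQ' : (Q -ᵥ X) +ᵥ X ∈ affineSpan ℝ ({X, Y} : Set (EuclideanSpace ℝ (Fin 2))) := by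
      simpa [lineThrough] using hQ
    rw [vadd_left_mem_affineSpan_pair] at hQ'
    obtain ⟨r, hr⟩ := hQ'
    have hQv : Q - X = r • v := hr.symm
    have h2 : dist P Q = ‖u - r • v‖ := by
      rw [dist_eq_norm]
      have h3 : P - Q = u - r • v := by rw [hu, ← hQv]; abel
      rw [h3]
    rw [h1] at hQlt ⊢
    rw [h2]
    have htv : t * ‖v‖ ^ 2 = (inner ℝ u v : ℝ) := by
      rw [ht]; field_simp
    have hle : ‖u - t • v‖ ^ 2 ≤ ‖u - r • v‖ ^ 2 := by
      rw [key, key]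
      have e1 : 2 * t * (inner ℝ u v : ℝ) = 2 * t * t * ‖v‖ ^ 2 := by rw [← htv]; ring
      have e2 : 2 * r * (inner ℝ u v : ℝ) = 2 * r * t * ‖v‖ ^ 2 := by rw [← htv]; ring
      nlinarith [mul_nonneg hvnorm.le (sq_nonneg (r - t)), e1, e2]
    nlinarith [norm_nonneg (u - t • v), norm_nonneg (u - r • v)]
  rw [hdist, h1, key, ht]
  field_simp
  ring

lemma gram_pts (A B C : EuclideanSpace ℝ (Fin 2)) :
    ‖B - C‖ ^ 2 * ‖A - C‖ ^ 2 - (inner ℝ (B - C) (A - C) : ℝ) ^ 2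
      = ‖A - B‖ ^ 2 * ‖C - B‖ ^ 2 - (inner ℝ (A - B) (C - B) : ℝ) ^ 2 := by
  simp only [← real_inner_self_eq_norm_sq, inner_sub_left, inner_sub_right]
  rw [real_inner_comm B A, real_inner_comm C A, real_inner_comm C B]
  ring

/-- If the distance sum function is constant on the triangle, then the triangle is
equilateral. -/
theorem stmt_1 (A B C : EuclideanSpace ℝ (Fin 2))
    (hind : AffineIndependent ℝ ![A, B, C])
    (hconst : ∀ P ∈ convexHull ℝ ({A, B, C} : Set (EuclideanSpace ℝ (Fin 2))),
      ∀ Q ∈ convexHull ℝ ({A, B, C} : Set (EuclideanSpace ℝ (Fin 2))),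
        vSum A B C P = vSum A B C Q) :
    dist A B = dist B C ∧ dist B C = dist C A := by
  have hncol : ¬Collinear ℝ ({A, B, C} : Set (EuclideanSpace ℝ (Fin 2))) :=
    affineIndependent_iff_not_collinear_set.1 hind
  -- distinctness
  have hAB : A ≠ B := by
    rintro rfl
    exact hncol ((collinear_pair ℝ A C).subset (by intro x hx; simpa using hx))
  have hBC : B ≠ C := by
    rintro rfl
    exact hncol ((collinear_pair ℝ A B).subset (by intro x hx; simpa using hx))
  have hCA : C ≠ A := by
    rintro rfl
    refine hncol ((collinear_pair ℝ C B).subset ?_)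
    intro x hx
    simp at hx ⊢
    tauto
  -- A is not on line BC
  have hAnot : A ∉ lineThrough B C := by
    intro h
    exact hncol (collinear_insert_of_mem_affineSpan_pair h)
  -- membership facts as set memberships
  have mCA : A ∈ lineThrough C A := right_mem_affineSpan_pair ℝ C A
  have mAB : A ∈ lineThrough A B := left_mem_affineSpan_pair ℝ A B
  have mBC : B ∈ lineThrough B C := left_mem_affineSpan_pair ℝ B C
  have mAB' : B ∈ lineThrough A B := right_mem_affineSpan_pair ℝ A B
  have mBC' : C ∈ lineThrough B C := right_mem_affineSpan_pair ℝ B C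
  have mCA' : C ∈ lineThrough C A := left_mem_affineSpan_pair ℝ C A
  -- vSum at the vertices
  have hVA : vSum A B C A = Metric.infDist A (lineThrough B C) := by
    unfold vSum
    rw [Metric.infDist_zero_of_mem mCA, Metric.infDist_zero_of_mem mAB]
    ring
  have hVB : vSum A B C B = Metric.infDist B (lineThrough C A) := by
    unfold vSum
    rw [Metric.infDist_zero_of_mem mBC, Metric.infDist_zero_of_mem mAB']
    ring
  have hVC : vSum A B C C = Metric.infDist C (lineThrough A B) := by
    unfold vSum
    rw [Metric.infDist_zero_of_mem mBC', Metric.infDist_zero_of_mem mCA']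
    ring
  -- vertices are in the hull
  have hmA : A ∈ convexHull ℝ ({A, B, C} : Set (EuclideanSpace ℝ (Fin 2))) :=
    subset_convexHull ℝ _ (by simp)
  have hmB : B ∈ convexHull ℝ ({A, B, C} : Set (EuclideanSpace ℝ (Fin 2))) :=
    subset_convexHull ℝ _ (by simp)
  have hmC : C ∈ convexHull ℝ ({A, B, C} : Set (EuclideanSpace ℝ (Fin 2))) :=
    subset_convexHull ℝ _ (by simp)
  set ha := Metric.infDist A (lineThrough B C) with hha
  set hb := Metric.infDist B (lineThrough C A) with hhb
  set hc := Metric.infDist C (lineThrough A B) with hhc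
  have hab : ha = hb := by rw [← hVA, ← hVB]; exact hconst A hmA B hmB
  have hac : ha = hc := by rw [← hVA, ← hVC]; exact hconst A hmA C hmC
  -- positivity of the height
  have hclosed : IsClosed (lineThrough B C) :=
    (affineSpan ℝ {B, C}).closed_of_finiteDimensional
  have hapos : 0 < ha := by
    rw [hha]
    exact (hclosed.notMem_iff_infDist_pos ⟨B, mBC⟩).1 hAnot
  -- the squared-height relations
  have eA := infDist_line_sq B C A hBC
  have eB := infDist_line_sq C A B hCA
  have eC := infDist_line_sq A B C hAB
  rw [← hha] at eA
  rw [← hhb] at eB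
  rw [← hhc] at eC
  -- gram identities
  have g1 : ‖B - C‖ ^ 2 * ‖A - C‖ ^ 2 - (inner ℝ (B - C) (A - C) : ℝ) ^ 2
      = ‖A - B‖ ^ 2 * ‖C - B‖ ^ 2 - (inner ℝ (A - B) (C - B) : ℝ) ^ 2 := gram_pts A B C
  have g2 : ‖C - A‖ ^ 2 * ‖B - A‖ ^ 2 - (inner ℝ (C - A) (B - A) : ℝ) ^ 2
      = ‖B - C‖ ^ 2 * ‖A - C‖ ^ 2 - (inner ℝ (B - C) (A - C) : ℝ) ^ 2 := gram_pts B C A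
  -- ha^2 * ‖C-B‖^2 = hb^2 * ‖A-C‖^2 = hc^2 * ‖B-A‖^2
  have e1 : ha ^ 2 * ‖C - B‖ ^ 2 = hb ^ 2 * ‖A - C‖ ^ 2 := by
    rw [eA, eB]; linarith [g1]
  have e2 : hb ^ 2 * ‖A - C‖ ^ 2 = hc ^ 2 * ‖B - A‖ ^ 2 := by
    rw [eB, eC]; linarith [g2]
  have hsq1 : ‖C - B‖ ^ 2 = ‖A - C‖ ^ 2 := by
    have : ha ^ 2 * ‖C - B‖ ^ 2 = ha ^ 2 * ‖A - C‖ ^ 2 := by rw [e1, hab]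
    have h2 : (0:ℝ) < ha ^ 2 := by positivity
    exact mul_left_cancel₀ (ne_of_gt h2) this
  have hbc' : hb = hc := hab.symm.trans hac
  have hsq2 : ‖A - C‖ ^ 2 = ‖B - A‖ ^ 2 := by
    have heq : hb ^ 2 * ‖A - C‖ ^ 2 = hb ^ 2 * ‖B - A‖ ^ 2 := by
      rw [e2, hbc']
    have h2 : (0:ℝ) < hb ^ 2 := by rw [← hab]; positivity
    exact mul_left_cancel₀ (ne_of_gt h2) heq
  have n1 : ‖C - B‖ = ‖A - C‖ := by
    rw [← Real.sqrt_sq (norm_nonneg (C - B)), ← Real.sqrt_sq (norm_nonneg (A - C)), hsq1]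
  have n2 : ‖A - C‖ = ‖B - A‖ := by
    rw [← Real.sqrt_sq (norm_nonneg (A - C)), ← Real.sqrt_sq (norm_nonneg (B - A)), hsq2]
  constructor
  · rw [dist_eq_norm, dist_eq_norm, norm_sub_rev A B, ← n2, ← n1, norm_sub_rev C B]
  · rw [dist_eq_norm, dist_eq_norm, norm_sub_rev B C]
    rw [norm_sub_rev C A]
    exact n1
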